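/- Let Γ > 0 and ε ∈ (0, √(2/(eπ))]. Define f(x) = (x/(2Γ)) · (erf(k(x+2Γ)) + erf(k(−x+2Γ)))/2 with k = (√2/(2Γ))·√(log(2/(π ε²))). Then for all x with |x| ≤ Γ one has |f(x) − x/(2Γ)| ≤ |x| ε /(2Γ). -/

import Mathlib

open MeasureTheory

/-- The error function `erf x = (2/√π) ∫_0^x e^{-y²} dy`. -/
noncomputable def erf (x : ℝ) : ℝ :=
  2 / Real.sqrt Real.pi * ∫ y in (0:ℝ)..x, Real.exp (-(y ^ 2))

open Set Real Filter

lemma integrable_gauss : Integrable (fun y : ℝ => Real.exp (-(y^2))) := by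
  simpa using integrable_exp_neg_mul_sq (one_pos)

noncomputable def G (t : ℝ) : ℝ := ∫ y in Set.Ioi t, Real.exp (-(y^2))

lemma G_zero : G 0 = Real.sqrt Real.pi / 2 := by
  have := integral_gaussian_Ioi (1:ℝ)
  simpa [G] using this

lemma integral_mul_gauss (t : ℝ) :
    ∫ y in Set.Ioi t, y * Real.exp (-(y^2)) = Real.exp (-(t^2)) / 2 := by
  have hderiv : ∀ x ∈ Set.Ioi t, HasDerivAt (fun y : ℝ => -Real.exp (-(y^2)) / 2)
      (x * Real.exp (-(x^2))) x := by
    intro x _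
    have h1 : HasDerivAt (fun y : ℝ => -(y^2)) (-(2*x)) x := by
      simpa using ((hasDerivAt_pow 2 x).fun_neg)
    have h2 := (h1.exp).fun_neg.div_const 2
    refine h2.congr_deriv ?_
    ring
  have hint : IntegrableOn (fun x : ℝ => x * Real.exp (-(x^2))) (Set.Ioi t) := by
    have : Integrable (fun x : ℝ => x * Real.exp (-1 * x^2)) := integrable_mul_exp_neg_mul_sq one_pos
    simpa using this.integrableOn
  have hcont : ContinuousWithinAt (fun y : ℝ => -Real.exp (-(y^2)) / 2) (Set.Ici t) t := by
    exact (Continuous.continuousWithinAt (by continuity))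
  have htend : Tendsto (fun y : ℝ => -Real.exp (-(y^2)) / 2) atTop (nhds 0) := by
    have : Tendsto (fun y : ℝ => -(y^2)) atTop atBot := by
      apply tendsto_neg_atBot_iff.mpr
      exact tendsto_pow_atTop (by norm_num)
    have := (Real.tendsto_exp_atBot.comp this).neg.div_const 2
    simpa using this
  have := integral_Ioi_of_hasDerivAt_of_tendsto hcont hderiv hint htend
  rw [this]; simp; ring

lemma G_le {t : ℝ} (ht : 0 < t) : G t ≤ Real.exp (-(t^2)) / (2*t) := by
  have hmono : G t ≤ ∫ y in Set.Ioi t, (y/t) * Real.exp (-(y^2)) := by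
    apply setIntegral_mono_on
    · exact integrable_gauss.integrableOn
    · have : Integrable (fun x : ℝ => x * Real.exp (-1 * x^2)) :=
        integrable_mul_exp_neg_mul_sq one_pos
      have h2 : IntegrableOn (fun x : ℝ => x * Real.exp (-(x^2))) (Set.Ioi t) := by
        simpa using this.integrableOn
      simpa [IntegrableOn, div_mul_eq_mul_div, div_eq_mul_inv, mul_comm, mul_assoc, mul_left_comm]
        using h2.mul_const (t⁻¹)
    · exact measurableSet_Ioi
    · intro y hy
      have h1 : 1 ≤ y / t := (one_le_div ht).mpr (le_of_lt hy)
      nlinarith [Real.exp_pos (-(y^2))]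
  have heq : ∫ y in Set.Ioi t, (y/t) * Real.exp (-(y^2))
      = (∫ y in Set.Ioi t, y * Real.exp (-(y^2))) / t := by
    rw [← integral_div]
    congr 1; ext y; ring
  rw [heq, integral_mul_gauss] at hmono
  calc G t ≤ Real.exp (-(t^2)) / 2 / t := hmono
    _ = Real.exp (-(t^2)) / (2*t) := by ring

lemma G_anti {s t : ℝ} (h : s ≤ t) : G t ≤ G s := by
  apply setIntegral_mono_set integrable_gauss.integrableOn
  · filter_upwards with y using Real.exp_nonneg _
  · filter_upwards with y hy using lt_of_le_of_lt h hy

lemma erf_eq {a : ℝ} (ha : 0 ≤ a) :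
    erf a = 1 - 2 / Real.sqrt Real.pi * G a := by
  have hsplit : G 0 = (∫ y in Set.Ioc 0 a, Real.exp (-(y^2))) + G a := by
    rw [G, G, ← setIntegral_union]
    · rw [Set.Ioc_union_Ioi_eq_Ioi ha]
    · exact Set.Ioc_disjoint_Ioi le_rfl
    · exact measurableSet_Ioi
    · exact integrable_gauss.integrableOn
    · exact integrable_gauss.integrableOn
  have hintv : ∫ y in (0:ℝ)..a, Real.exp (-(y^2)) = G 0 - G a := by
    rw [intervalIntegral.integral_of_le ha, hsplit]; ring
  have hpi : Real.sqrt Real.pi ≠ 0 := by positivity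
  rw [erf, hintv, G_zero]
  field_simp

lemma G_nonneg (t : ℝ) : 0 ≤ G t :=
  setIntegral_nonneg measurableSet_Ioi (fun y _ => Real.exp_nonneg _)

/-- Entire approximation to the truncated linear function: for `Γ > 0`,
`ε ∈ (0, √(2/(eπ))]` and `k = (√2/(2Γ))·√(log(2/(π ε²)))`, the function
`f x = (x/(2Γ)) · (erf(k(x+2Γ)) + erf(k(−x+2Γ)))/2` satisfies
`|f x − x/(2Γ)| ≤ |x| ε /(2Γ)` for all `|x| ≤ Γ`. -/
theorem erf_approx_lin (Γ ε k : ℝ) (hΓ : 0 < Γ) (hε0 : 0 < ε)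
    (hε : ε ≤ Real.sqrt (2 / (Real.exp 1 * Real.pi)))
    (hk : k = Real.sqrt 2 / (2 * Γ) * Real.sqrt (Real.log (2 / (Real.pi * ε ^ 2)))) :
    ∀ x : ℝ, |x| ≤ Γ →
      |x / (2 * Γ) * ((erf (k * (x + 2 * Γ)) + erf (k * (-x + 2 * Γ))) / 2) - x / (2 * Γ)| ≤
        |x| * ε / (2 * Γ) := by
  intro x hx
  set L := Real.log (2 / (Real.pi * ε ^ 2)) with hLdef
  have hπ : (0:ℝ) < Real.pi := Real.pi_pos
  have harg : (0:ℝ) < 2 / (Real.pi * ε ^ 2) := by positivity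
  have hε2 : ε ^ 2 ≤ 2 / (Real.exp 1 * Real.pi) := by
    have h0 : (0:ℝ) ≤ 2 / (Real.exp 1 * Real.pi) := by positivity
    nlinarith [Real.sq_sqrt h0, Real.sqrt_nonneg (2 / (Real.exp 1 * Real.pi)),
      mul_self_le_mul_self hε0.le hε]
  have hε2' : ε ^ 2 * (Real.exp 1 * Real.pi) ≤ 2 := by
    rw [le_div_iff₀ (by positivity)] at hε2; linarith
  have hL : 1 ≤ L := by
    rw [hLdef, Real.le_log_iff_exp_le harg, le_div_iff₀ (by positivity)]
    nlinarith
  have hL0 : (0:ℝ) ≤ L := by linarith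
  set t := k * Γ with htdef
  have ht_eq : t = Real.sqrt 2 * Real.sqrt L / 2 := by
    rw [htdef, hk]; field_simp
  have ht2 : t ^ 2 = L / 2 := by
    rw [ht_eq, div_pow, mul_pow, Real.sq_sqrt (by norm_num : (0:ℝ) ≤ 2), Real.sq_sqrt hL0]
    ring
  have ht_pos : 0 < t := by
    rw [ht_eq]
    have : 0 < Real.sqrt L := Real.sqrt_pos.mpr (by linarith)
    positivity
  have hk0 : 0 ≤ k := by
    have := ht_pos
    rw [htdef] at this
    nlinarith
  have hE : Real.exp (-(t ^ 2)) ^ 2 = Real.pi * ε ^ 2 / 2 := by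
    rw [← Real.exp_nat_mul]
    have h : ((2:ℕ):ℝ) * -(t ^ 2) = -L := by rw [ht2]; push_cast; ring
    rw [h, Real.exp_neg, hLdef, Real.exp_log harg]
    field_simp
  set c := Real.sqrt Real.pi with hcdef
  have hc : 0 < c := Real.sqrt_pos.mpr hπ
  have key : Real.exp (-(t ^ 2)) ≤ ε * (t * c) := by
    have hsq : Real.exp (-(t ^ 2)) ^ 2 ≤ (ε * (t * c)) ^ 2 := by
      have h1 : (ε * (t * c)) ^ 2 = ε ^ 2 * t ^ 2 * Real.pi := by
        rw [mul_pow, mul_pow, hcdef, Real.sq_sqrt hπ.le]; ring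
      rw [hE, h1, ht2]
      nlinarith
    exact le_of_pow_le_pow_left₀ two_ne_zero (by positivity) hsq
  set a := k * (x + 2 * Γ) with hadef
  set b := k * (-x + 2 * Γ) with hbdef
  have hxl : -Γ ≤ x := (abs_le.mp hx).1
  have hxr : x ≤ Γ := (abs_le.mp hx).2
  have hta : t ≤ a := by
    rw [htdef, hadef]
    nlinarith [mul_nonneg hk0 (by linarith : (0:ℝ) ≤ x + Γ)]
  have htb : t ≤ b := by
    rw [htdef, hbdef]
    nlinarith [mul_nonneg hk0 (by linarith : (0:ℝ) ≤ Γ - x)]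
  have hS : |(erf a + erf b) / 2 - 1| ≤ ε := by
    have hval : (erf a + erf b) / 2 - 1 = -((G a + G b) / c) := by
      rw [erf_eq (le_trans ht_pos.le hta), erf_eq (le_trans ht_pos.le htb)]
      field_simp
      ring
    have hfinal : G a + G b ≤ ε * c := by
      have h1 := G_le ht_pos
      have h2 := G_anti hta
      have h3 := G_anti htb
      have h4 : Real.exp (-(t ^ 2)) / (2 * t) ≤ ε * c / 2 := by
        rw [div_le_div_iff₀ (by positivity) two_pos]
        have hr : ε * c * (2 * t) = 2 * (ε * (t * c)) := by ring
        linarith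
      linarith
    rw [hval, abs_neg, abs_of_nonneg (div_nonneg (by linarith [G_nonneg a, G_nonneg b]) hc.le), div_le_iff₀ hc]
    exact hfinal
  have hre : x / (2 * Γ) * ((erf a + erf b) / 2) - x / (2 * Γ)
      = x / (2 * Γ) * ((erf a + erf b) / 2 - 1) := by ring
  rw [hre, abs_mul, abs_div, abs_of_pos (by positivity : (0:ℝ) < 2 * Γ)]
  calc |x| / (2 * Γ) * |(erf a + erf b) / 2 - 1| ≤ |x| / (2 * Γ) * ε :=
        mul_le_mul_of_nonneg_left hS (by positivity)
    _ = |x| * ε / (2 * Γ) := by ring
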